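/- Let β be real, let α > 1/4 + β/8, set ρ := ρ_{α,β,0} and σ̃ := ρ_{1/4+β/8, β, 0}. Then the normalized geometric operator satisfies the identity (1/‖σ̃ − ρ‖)·(σ̃ − ρ − Re⟨σ̃, σ̃ − ρ⟩·1₉) = (1/(6√2))·(2·1₉ − U₁ − U₂) as 9×9 complex matrices (the witness C_I for region I in Weyl form). -/

import Mathlib

open Matrix Complex
open scoped Matrix Kronecker ComplexOrder

noncomputable section

/-- A density matrix: Hermitian, positive semidefinite, trace 1. -/
def IsDensityMatrix {n : Type*} [Fintype n] [DecidableEq n] (ρ : Matrix n n ℂ) : Prop :=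
  ρ.IsHermitian ∧ ρ.PosSemidef ∧ ρ.trace = 1

/-- A separable state on ℂ^d ⊗ ℂ^d : a finite convex combination of Kronecker
products of density matrices. -/
def IsSepState {d : ℕ} (ρ : Matrix (Fin d × Fin d) (Fin d × Fin d) ℂ) : Prop :=
  ∃ (K : ℕ) (p : Fin K → ℝ) (ρ₁ ρ₂ : Fin K → Matrix (Fin d) (Fin d) ℂ),
    (∀ k, 0 ≤ p k) ∧ (∑ k, p k = 1) ∧
    (∀ k, IsDensityMatrix (ρ₁ k)) ∧ (∀ k, IsDensityMatrix (ρ₂ k)) ∧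
    ρ = ∑ k, (p k : ℂ) • (ρ₁ k ⊗ₖ ρ₂ k)

/-- Hilbert–Schmidt inner product ⟨A,B⟩ = Tr(A†B). -/
def hsInner {n : Type*} [Fintype n] (A B : Matrix n n ℂ) : ℂ := (Aᴴ * B).trace

/-- Hilbert–Schmidt (Frobenius) norm ‖A‖ = √Tr(A†A). -/
def hsNorm {n : Type*} [Fintype n] (A : Matrix n n ℂ) : ℝ :=
  Real.sqrt ((Aᴴ * A).trace.re)

/-- The Weyl operator U_{nm} on ℂ^d: (U_{nm})_{k,l} = exp(2πi k n / d) if l = (k+m) mod d. -/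
def weyl (d : ℕ) (n m : Fin d) : Matrix (Fin d) (Fin d) ℂ :=
  Matrix.of fun k l =>
    if l = k + m then Complex.exp (2 * Real.pi * Complex.I * k.val * n.val / d) else 0

/-- The maximally entangled two-qutrit vector |φ⁺₃⟩. -/
def phiPlus3 : (Fin 3 × Fin 3) → ℂ :=
  fun p => if p.1 = p.2 then ((1 / Real.sqrt 3 : ℝ) : ℂ) else 0

/-- The projector |φ⁺₃⟩⟨φ⁺₃|. -/
def projPhiPlus3 : Matrix (Fin 3 × Fin 3) (Fin 3 × Fin 3) ℂ :=
  vecMulVec phiPlus3 (star phiPlus3)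

/-- The two-qutrit Bell projectors P_{nm}. -/
def bellP (n m : Fin 3) : Matrix (Fin 3 × Fin 3) (Fin 3 × Fin 3) ℂ :=
  (weyl 3 n m ⊗ₖ (1 : Matrix (Fin 3) (Fin 3) ℂ)) * projPhiPlus3 *
    (weyl 3 n m ⊗ₖ (1 : Matrix (Fin 3) (Fin 3) ℂ))ᴴ

/-- The three-parameter family of two-qutrit states ρ_{α,β,γ}. -/
def rhoFam (α β γ : ℝ) : Matrix (Fin 3 × Fin 3) (Fin 3 × Fin 3) ℂ :=
  (((1 - α - β - γ) / 9 : ℝ) : ℂ) • (1 : Matrix (Fin 3 × Fin 3) (Fin 3 × Fin 3) ℂ) +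
    (α : ℂ) • bellP 0 0 + ((β / 2 : ℝ) : ℂ) • (bellP 1 0 + bellP 2 0) +
    ((γ / 3 : ℝ) : ℂ) • (bellP 0 1 + bellP 1 1 + bellP 2 1)

/-- The operator U₁. -/
def opU1 : Matrix (Fin 3 × Fin 3) (Fin 3 × Fin 3) ℂ :=
  weyl 3 0 1 ⊗ₖ weyl 3 0 1 + weyl 3 0 2 ⊗ₖ weyl 3 0 2 + weyl 3 1 1 ⊗ₖ weyl 3 2 1 +
    weyl 3 1 2 ⊗ₖ weyl 3 2 2 + weyl 3 2 1 ⊗ₖ weyl 3 1 1 + weyl 3 2 2 ⊗ₖ weyl 3 1 2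

/-- The operator U₂ᴵ. -/
def opU2I : Matrix (Fin 3 × Fin 3) (Fin 3 × Fin 3) ℂ := weyl 3 1 0 ⊗ₖ weyl 3 2 0

/-- The operator U₂ᴵᴵ. -/
def opU2II : Matrix (Fin 3 × Fin 3) (Fin 3 × Fin 3) ℂ := weyl 3 2 0 ⊗ₖ weyl 3 1 0

/-- The operator U₂ = U₂ᴵ + U₂ᴵᴵ. -/
def opU2 : Matrix (Fin 3 × Fin 3) (Fin 3 × Fin 3) ℂ := opU2I + opU2II

/-- σ₊ = (1/3)(|01⟩⟨01| + |12⟩⟨12| + |20⟩⟨20|). -/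
def sigmaPlus : Matrix (Fin 3 × Fin 3) (Fin 3 × Fin 3) ℂ :=
  (1 / 3 : ℂ) • Matrix.diagonal (fun p => if p.2 = p.1 + 1 then 1 else 0)

/-- σ₋ = (1/3)(|10⟩⟨10| + |21⟩⟨21| + |02⟩⟨02|). -/
def sigmaMinus : Matrix (Fin 3 × Fin 3) (Fin 3 × Fin 3) ℂ :=
  (1 / 3 : ℂ) • Matrix.diagonal (fun p => if p.1 = p.2 + 1 then 1 else 0)

/-- The Horodecki states ρ_b. -/
def horodecki (b : ℝ) : Matrix (Fin 3 × Fin 3) (Fin 3 × Fin 3) ℂ :=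
  (2 / 7 : ℂ) • projPhiPlus3 + ((b / 7 : ℝ) : ℂ) • sigmaPlus +
    (((5 - b) / 7 : ℝ) : ℂ) • sigmaMinus

/-- Partial transpose in the second subsystem. -/
def ptB (ρ : Matrix (Fin 3 × Fin 3) (Fin 3 × Fin 3) ℂ) :
    Matrix (Fin 3 × Fin 3) (Fin 3 × Fin 3) ℂ :=
  Matrix.of fun p q => ρ (p.1, q.2) (q.1, p.2)

namespace StmtAux

def ω : ℂ := Complex.exp (2 * Real.pi * Complex.I / 3)

lemma hω3 : ω ^ 3 = 1 := by
  rw [ω, ← Complex.exp_nat_mul]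
  rw [show ((3:ℕ):ℂ) * (2 * Real.pi * Complex.I / 3) = 2 * Real.pi * Complex.I by push_cast; ring]
  exact Complex.exp_two_pi_mul_I

lemma ω_ne_one : ω ≠ 1 := by
  intro h
  have h1 : ω = Complex.exp (((2 * Real.pi / 3 : ℝ)) * Complex.I) := by
    rw [ω]; congr 1; push_cast; ring
  have h2 : ω.im = Real.sin (2 * Real.pi / 3) := by
    rw [h1, Complex.exp_ofReal_mul_I_im]
  have h3 : 0 < Real.sin (2 * Real.pi / 3) := by
    apply Real.sin_pos_of_pos_of_lt_pi
    · positivity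
    · nlinarith [Real.pi_pos]
  rw [h] at h2; simp at h2; linarith

lemma hωsum : 1 + ω + ω ^ 2 = 0 := by
  have h : (ω - 1) * (1 + ω + ω ^ 2) = 0 := by linear_combination hω3
  rcases mul_eq_zero.1 h with h' | h'
  · exact absurd (sub_eq_zero.1 h') ω_ne_one
  · exact h'

lemma star_ω : star ω = ω ^ 2 := by
  have h1 : star ω = Complex.exp (-(2 * Real.pi * Complex.I / 3)) := by
    rw [ω]
    rw [show star (Complex.exp (2 * Real.pi * Complex.I / 3)) = (starRingEnd ℂ) (Complex.exp (2 * Real.pi * Complex.I / 3)) from rfl, ← Complex.exp_conj]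
    congr 1
    simp [map_div₀, Complex.conj_I, Complex.conj_ofReal, map_ofNat]
    ring
  have h2 : ω ^ 2 = Complex.exp (2 * (2 * Real.pi * Complex.I / 3)) := by
    rw [ω, ← Complex.exp_nat_mul]; push_cast; ring_nf
  rw [h1, h2, show (2 : ℂ) * (2 * Real.pi * Complex.I / 3) = -(2 * Real.pi * Complex.I / 3) + 2 * Real.pi * Complex.I by ring, Complex.exp_add, Complex.exp_two_pi_mul_I, mul_one]

lemma weyl_apply (n m k l : Fin 3) :
    weyl 3 n m k l = if l = k + m then ω ^ (k.val * n.val) else 0 := by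
  simp only [weyl, Matrix.of_apply]
  congr 1
  rw [show (2 * Real.pi * Complex.I * (k.val : ℂ) * (n.val : ℂ) / ((3:ℕ) : ℂ))
      = ((k.val * n.val : ℕ) : ℂ) * (2 * Real.pi * Complex.I / 3) by push_cast; ring,
    Complex.exp_nat_mul, ω]

lemma proj_apply (p q : Fin 3 × Fin 3) :
    projPhiPlus3 p q = if p.1 = p.2 ∧ q.1 = q.2 then (1/3 : ℂ) else 0 := by
  have h3 : (Real.sqrt 3)⁻¹ * (Real.sqrt 3)⁻¹ = (3:ℝ)⁻¹ := by
    rw [← mul_inv, Real.mul_self_sqrt (by norm_num)]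
  by_cases h1 : p.1 = p.2 <;> by_cases h2 : q.1 = q.2 <;>
    simp [projPhiPlus3, vecMulVec_apply, phiPlus3, h1, h2, Complex.conj_ofReal,
      ← Complex.ofReal_inv, ← Complex.ofReal_mul, h3] <;> norm_num

lemma weyl_n0_diag (n : Fin 3) :
    weyl 3 n 0 = Matrix.diagonal fun k => ω ^ (k.val * n.val) := by
  ext k l
  rw [weyl_apply, Matrix.diagonal_apply]
  by_cases h : k = l <;> simp [h, eq_comm]

lemma bellP_n0_apply (n : Fin 3) (p q : Fin 3 × Fin 3) :
    bellP n 0 p q = ω ^ (p.1.val * n.val) * projPhiPlus3 p q * star (ω ^ (q.1.val * n.val)) := by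
  rw [bellP, weyl_n0_diag,
    show (1 : Matrix (Fin 3) (Fin 3) ℂ) = Matrix.diagonal (fun _ => 1) from (Matrix.diagonal_one).symm,
    Matrix.diagonal_kronecker_diagonal, Matrix.diagonal_conjTranspose]
  rw [Matrix.mul_diagonal, Matrix.diagonal_mul]
  simp [Pi.star_apply]

end StmtAux
namespace StmtAux

set_option maxHeartbeats 2000000 in
lemma fin3_val_two : ((2 : Fin 3) : ℕ) = 2 := rfl
lemma fin3_val_two' : ((⟨2, by norm_num⟩ : Fin 3) : ℕ) = 2 := rfl

lemma key : opU1 + opU2 + 1 = (9:ℂ) • projPhiPlus3 := by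
  ext p q
  obtain ⟨p1, p2⟩ := p
  obtain ⟨q1, q2⟩ := q
  fin_cases p1 <;> fin_cases p2 <;> fin_cases q1 <;> fin_cases q2 <;>
    simp (config := { decide := true }) only [opU1, opU2, opU2I, opU2II, Matrix.add_apply,
      Matrix.smul_apply, Matrix.kroneckerMap_apply, weyl_apply, proj_apply, Matrix.one_apply,
      Fin.isValue, Fin.val_zero, Fin.val_one, fin3_val_two, fin3_val_two', smul_eq_mul, if_true, if_false, ite_true, ite_false] <;>
    first
      | (norm_num; done)
      | rfl
      | linear_combination hωsum
      | linear_combination (2:ℂ) * hω3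
      | linear_combination (2 + 2*ω^3) * hω3
      | linear_combination ω * hω3 + hωsum
      | linear_combination (ω + ω^2) * hω3 + hωsum
      | linear_combination (2*ω^3 - ω^2 - ω + 2) * hω3 - hωsum
      | (ring_nf; linear_combination (2*ω^3 - ω^2 - ω + 2) * hω3 - hωsum)
      | linear_combination (-2*ω^3 + 2*ω^2 + 2*ω - 2) * hω3 + 2*hωsum

end StmtAux
namespace StmtAux

lemma bell00 : bellP 0 0 = projPhiPlus3 := by
  ext p q
  rw [bellP_n0_apply]
  simp

def Dmat : Matrix (Fin 3 × Fin 3) (Fin 3 × Fin 3) ℂ := (1/9 : ℂ) • 1 - projPhiPlus3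

lemma Dmat_apply (p q : Fin 3 × Fin 3) :
    Dmat p q = (if p = q then (1/9 : ℂ) else 0) - (if p.1 = p.2 ∧ q.1 = q.2 then (1/3 : ℂ) else 0) := by
  simp only [Dmat, Matrix.sub_apply, Matrix.smul_apply, Matrix.one_apply, proj_apply, smul_eq_mul]
  split <;> simp

set_option maxHeartbeats 1000000 in
lemma traceDD : (Dmatᴴ * Dmat).trace = (8/9 : ℂ) := by
  simp (config := { decide := true }) only [Matrix.trace, Matrix.diag_apply, Matrix.mul_apply,
    Matrix.conjTranspose_apply, Dmat_apply, Fintype.sum_prod_type, Fin.sum_univ_three,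
    if_true, if_false, ite_true, ite_false, star_sub, star_zero]
  norm_num

set_option maxHeartbeats 1000000 in
lemma tracePD : (projPhiPlus3ᴴ * Dmat).trace = (-8/9 : ℂ) := by
  simp (config := { decide := true }) only [Matrix.trace, Matrix.diag_apply, Matrix.mul_apply,
    Matrix.conjTranspose_apply, Dmat_apply, proj_apply, Fintype.sum_prod_type,
    Fin.sum_univ_three, if_true, if_false, ite_true, ite_false, star_sub, star_zero]
  norm_num

set_option maxHeartbeats 1000000 in
lemma trace1D : ((1 : Matrix (Fin 3 × Fin 3) (Fin 3 × Fin 3) ℂ)ᴴ * Dmat).trace = 0 := by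
  simp (config := { decide := true }) only [Matrix.trace, Matrix.diag_apply, Matrix.mul_apply,
    Matrix.conjTranspose_apply, Dmat_apply, Matrix.one_apply, Fintype.sum_prod_type,
    Fin.sum_univ_three, if_true, if_false, ite_true, ite_false, star_sub, star_zero]
  norm_num

set_option maxHeartbeats 1000000 in
lemma traceB1D : ((bellP 1 0)ᴴ * Dmat).trace = (1/9 : ℂ) := by
  have hb : ∀ p q, (bellP 1 0) p q = ω ^ (p.1.val * 1) * projPhiPlus3 p q * star (ω ^ (q.1.val * 1)) :=
    fun p q => bellP_n0_apply 1 p q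
  simp (config := { decide := true }) only [Matrix.trace, Matrix.diag_apply, Matrix.mul_apply,
    Matrix.conjTranspose_apply, hb, Dmat_apply, proj_apply, Fintype.sum_prod_type,
    Fin.sum_univ_three, if_true, if_false, ite_true, ite_false, star_sub, star_zero,
    star_mul', star_pow, star_star, star_ω, Complex.star_def, map_div₀, _root_.map_one, map_ofNat, map_zero,  Fin.isValue, Fin.val_zero, Fin.val_one,
    fin3_val_two, fin3_val_two', mul_zero, zero_mul, mul_one, one_mul, pow_zero]
  linear_combination ((-(1/9)*ω^3 - (1/9)*ω^2 + (2/9)*ω + 2/9) + ((-2/27)*ω^9 + (-1/9)*ω^7 + (-2/27)*ω^6 + (-2/9)*ω^5 + (-1/9)*ω^4 + (-1/27)*ω^3 + (-1/9)*ω^2 + (-5/9)*ω + (-10/27))) * hω3 + (1/3 + (-2/3)) * hωsum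

set_option maxHeartbeats 1000000 in
lemma traceB2D : ((bellP 2 0)ᴴ * Dmat).trace = (1/9 : ℂ) := by
  have hb : ∀ p q, (bellP 2 0) p q = ω ^ (p.1.val * 2) * projPhiPlus3 p q * star (ω ^ (q.1.val * 2)) :=
    fun p q => bellP_n0_apply 2 p q
  simp (config := { decide := true }) only [Matrix.trace, Matrix.diag_apply, Matrix.mul_apply,
    Matrix.conjTranspose_apply, hb, Dmat_apply, proj_apply, Fintype.sum_prod_type,
    Fin.sum_univ_three, if_true, if_false, ite_true, ite_false, star_sub, star_zero,
    star_mul', star_pow, star_star, star_ω, Complex.star_def, map_div₀, _root_.map_one, map_ofNat, map_zero,  Fin.isValue, Fin.val_zero, Fin.val_one,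
    fin3_val_two, fin3_val_two', mul_zero, zero_mul, mul_one, one_mul, pow_zero]
  linear_combination ((-(1/9)*ω^3 - (1/9)*ω^2 + (2/9)*ω + 2/9) + ((-2/27)*ω^21 + (-2/27)*ω^18 + (-1/9)*ω^17 + (-2/27)*ω^15 + (-1/9)*ω^14 + (-2/9)*ω^13 + (-2/27)*ω^12 + (-1/9)*ω^11 + (-2/9)*ω^10 + (-4/27)*ω^9 + (-1/9)*ω^8 + (-2/9)*ω^7 + (-4/27)*ω^6 + (-1/3)*ω^5 + (-2/9)*ω^4 + (-1/27)*ω^3 + (-2/9)*ω^2 + (-5/9)*ω + (-10/27))) * hω3 + (1/3 + (-2/3)) * hωsum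

end StmtAux
namespace StmtAux

lemma rhoFam_diff (a a' b : ℝ) :
    rhoFam a' b 0 - rhoFam a b 0 = ((a - a' : ℝ) : ℂ) • Dmat := by
  have h0 : ((0/3 : ℝ) : ℂ) = 0 := by norm_num
  simp only [rhoFam, bell00, Dmat, h0, zero_smul, add_zero]
  push_cast
  module

lemma traceRD' (a b : ℝ) :
    ((rhoFam a b 0)ᴴ * Dmat).trace = ((-8*a/9 + b/9 : ℝ) : ℂ) := by
  have h0 : ((0/3 : ℝ) : ℂ) = 0 := by norm_num
  simp only [rhoFam, bell00, h0, zero_smul, add_zero, Matrix.conjTranspose_add,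
    Matrix.conjTranspose_smul, Matrix.add_mul, Matrix.smul_mul, Matrix.trace_add,
    Matrix.trace_smul, tracePD, traceB1D, traceB2D, trace1D, smul_eq_mul,
    Complex.star_def, Complex.conj_ofReal]
  push_cast
  ring

end StmtAux

open StmtAux in
/-- The witness C_I for region I in Weyl form. -/
theorem stmt7 (α β : ℝ) (hα : 1 / 4 + β / 8 < α)
    (ρ σt : Matrix (Fin 3 × Fin 3) (Fin 3 × Fin 3) ℂ)
    (hρ : ρ = rhoFam α β 0) (hσt : σt = rhoFam (1 / 4 + β / 8) β 0) :
    (1 / hsNorm (σt - ρ)) • (σt - ρ - (((hsInner σt (σt - ρ)).re : ℝ) : ℂ) • 1)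
      = ((1 / (6 * Real.sqrt 2) : ℝ) : ℂ) •
        (2 • (1 : Matrix (Fin 3 × Fin 3) (Fin 3 × Fin 3) ℂ) - opU1 - opU2) := by
  have hc : 0 < α - (1/4 + β/8) := by linarith
  set c : ℝ := α - (1/4 + β/8) with hcdef
  have hdiff : σt - ρ = ((c : ℝ) : ℂ) • Dmat := by
    rw [hρ, hσt, rhoFam_diff α (1/4+β/8) β]
  have h2 : Real.sqrt 2 * Real.sqrt 2 = 2 := Real.mul_self_sqrt (by norm_num)
  have hnorm : hsNorm (σt - ρ) = c * (2 * Real.sqrt 2 / 3) := by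
    rw [hsNorm, hdiff]
    have ht : ((((c:ℂ) • Dmat)ᴴ) * ((c:ℂ) • Dmat)).trace = ((c^2 * (8/9) : ℝ) : ℂ) := by
      rw [Matrix.conjTranspose_smul, Matrix.smul_mul, Matrix.mul_smul, smul_smul,
        Matrix.trace_smul, traceDD, smul_eq_mul, Complex.star_def, Complex.conj_ofReal]
      push_cast
      ring
    rw [ht, Complex.ofReal_re,
      show c^2 * (8/9) = (c * (2 * Real.sqrt 2 / 3))^2 by nlinarith [h2]]
    exact Real.sqrt_sq (by positivity)
  have hinner : (hsInner σt (σt - ρ)).re = -(2*c)/9 := by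
    rw [hsInner, hdiff, hσt, Matrix.mul_smul, Matrix.trace_smul, traceRD',
      show (-8*(1/4+β/8)/9 + β/9 : ℝ) = -2/9 by ring, smul_eq_mul,
      show (c:ℂ) * ((-2/9 : ℝ):ℂ) = ((-(2*c)/9 : ℝ):ℂ) by push_cast; ring,
      Complex.ofReal_re]
  have hU : opU1 + opU2 = (9:ℂ) • projPhiPlus3 - 1 := by rw [← key]; abel
  rw [hnorm, hinner, hdiff, sub_sub (2 • (1 : Matrix (Fin 3 × Fin 3) (Fin 3 × Fin 3) ℂ)), hU]
  simp only [Dmat]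
  have hcne : (c:ℂ) ≠ 0 := by
    simpa using ne_of_gt hc
  have hsne : ((Real.sqrt 2 : ℝ) : ℂ) ≠ 0 := by
    simpa using (Real.sqrt_ne_zero' (x := 2)).2 (by norm_num)
  have hs2 : ((Real.sqrt 2 : ℝ) : ℂ) * ((Real.sqrt 2 : ℝ) : ℂ) = 2 := by
    rw [← Complex.ofReal_mul, h2]; norm_num
  match_scalars
  · push_cast
    field_simp
    simp only [Algebra.cast, Complex.coe_algebraMap]
    ring
  · push_cast
    field_simp
    simp only [Algebra.cast, Complex.coe_algebraMap]
    ring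
end
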